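/- Let 𝔅 be a bornology on a topological space X with a compact base, let n ∈ ω, and let 𝒰 be an open 𝔅ⁿ-cover of Xⁿ. Then there exists an open 𝔅-cover 𝒱 of X such that {Vⁿ : V ∈ 𝒱} is a 𝔅ⁿ-cover of Xⁿ refining 𝒰. -/

import Mathlib

open Set

universe u

def IsBornology {X : Type u} (B : Set (Set X)) : Prop :=
  ⋃₀ B = univ ∧ (∀ b ∈ B, ∀ b' ⊆ b, b' ∈ B) ∧ ∀ b ∈ B, ∀ b' ∈ B, b ∪ b' ∈ B

def HasClosedBase {X : Type u} [TopologicalSpace X] (B : Set (Set X)) : Prop :=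
  ∃ B0 ⊆ B, (∀ b ∈ B0, IsClosed b) ∧ ∀ b ∈ B, ∃ b0 ∈ B0, b ⊆ b0

def HasCompactBase {X : Type u} [TopologicalSpace X] (B : Set (Set X)) : Prop :=
  ∃ B0 ⊆ B, (∀ b ∈ B0, IsCompact b) ∧ ∀ b ∈ B, ∃ b0 ∈ B0, b ⊆ b0

def IsBCover {X : Type u} [TopologicalSpace X] (B U : Set (Set X)) : Prop :=
  (∀ u ∈ U, IsOpen u) ∧ univ ∉ U ∧ ∀ b ∈ B, ∃ u ∈ U, b ⊆ u

def IsGammaBCover {X : Type u} [TopologicalSpace X] (B U : Set (Set X)) : Prop :=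
  U.Infinite ∧ (∀ u ∈ U, IsOpen u ∧ u ≠ univ) ∧ ∀ b ∈ B, {u ∈ U | ¬ b ⊆ u}.Finite

def IsOpenCover {X : Type u} [TopologicalSpace X] (U : Set (Set X)) : Prop :=
  (∀ u ∈ U, IsOpen u) ∧ ⋃₀ U = univ

def IsOmegaCover {X : Type u} [TopologicalSpace X] (U : Set (Set X)) : Prop :=
  (∀ u ∈ U, IsOpen u) ∧ univ ∉ U ∧ ∀ F : Set X, F.Finite → ∃ u ∈ U, F ⊆ u

def IsGammaCover {X : Type u} [TopologicalSpace X] (U : Set (Set X)) : Prop :=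
  U.Infinite ∧ (∀ u ∈ U, IsOpen u) ∧ ∀ x : X, {u ∈ U | x ∉ u}.Finite

def BLindelof {X : Type u} [TopologicalSpace X] (B : Set (Set X)) : Prop :=
  ∀ U, IsBCover B U → ∃ V ⊆ U, V.Countable ∧ IsBCover B V

def S1 {X : Type u} (A C : Set (Set X) → Prop) : Prop :=
  ∀ U : ℕ → Set (Set X), (∀ n, A (U n)) →
    ∃ V : ℕ → Set X, (∀ n, V n ∈ U n) ∧ C (Set.range V)

def Sfin {X : Type u} (A C : Set (Set X) → Prop) : Prop :=
  ∀ U : ℕ → Set (Set X), (∀ n, A (U n)) →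
    ∃ V : ℕ → Set (Set X), (∀ n, (V n).Finite ∧ V n ⊆ U n) ∧ C (⋃ n, V n)

def Ufin {X : Type u} (A C : Set (Set X) → Prop) : Prop :=
  ∀ U : ℕ → Set (Set X), (∀ n, A (U n)) →
    ∃ V : ℕ → Set (Set X), (∀ n, (V n).Finite ∧ V n ⊆ U n) ∧
      ((∃ n, ⋃₀ V n = univ) ∨ C {s | ∃ n, s = ⋃₀ V n})
def powSet {X : Type u} (b : Set X) (n : ℕ) : Set (Fin n → X) := {f | ∀ i, f i ∈ b}

def BornPow {X : Type u} (B : Set (Set X)) (n : ℕ) : Set (Set (Fin n → X)) :=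
  {s | ∃ b ∈ B, s ⊆ powSet b n}

lemma powSet_eq_pi {X : Type u} (b : Set X) (n : ℕ) :
    powSet b n = Set.pi univ (fun _ : Fin n => b) := by
  ext f; simp [powSet]

lemma isOpen_powSet {X : Type u} [TopologicalSpace X] {b : Set X} (hb : IsOpen b) (n : ℕ) :
    IsOpen (powSet b n) := by
  rw [powSet_eq_pi]; exact isOpen_set_pi finite_univ fun _ _ => hb

lemma isCompact_powSet {X : Type u} [TopologicalSpace X] {b : Set X} (hb : IsCompact b) (n : ℕ) :
    IsCompact (powSet b n) := by
  rw [powSet_eq_pi]; exact isCompact_univ_pi fun _ => hb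

lemma powSet_mono {X : Type u} {a b : Set X} (h : a ⊆ b) (n : ℕ) :
    powSet a n ⊆ powSet b n := fun f hf i => h (hf i)

lemma powSet_univ {X : Type u} (n : ℕ) : powSet (univ : Set X) n = univ := by
  ext f; simp [powSet]

lemma wallace {X : Type u} [TopologicalSpace X] (n : ℕ) :
    ∀ K : Set X, IsCompact K → ∀ U : Set (Fin n → X), IsOpen U → powSet K n ⊆ U →
      ∃ V : Set X, IsOpen V ∧ K ⊆ V ∧ powSet V n ⊆ U := by
  induction n with
  | zero =>
    intro K _ U hUo hKU
    exact ⟨univ, isOpen_univ, subset_univ _, fun f _ => hKU (fun i => i.elim0)⟩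
  | succ n ih =>
    intro K hK U hUo hKU
    set U' : Set (X × (Fin n → X)) := {p | Fin.cons p.1 p.2 ∈ U} with hU'
    have hcont : Continuous (fun p : X × (Fin n → X) => (Fin.cons p.1 p.2 : Fin (n+1) → X)) := by
      refine continuous_pi fun i => ?_
      refine Fin.cases ?_ (fun j => ?_) i
      · simpa using continuous_fst
      · have h : Continuous fun p : X × (Fin n → X) => p.2 j := (continuous_apply j).comp continuous_snd
        simpa using h
    have hU'o : IsOpen U' := hUo.preimage hcont
    have hsub : K ×ˢ powSet K n ⊆ U' := by
      rintro ⟨x, g⟩ ⟨hx, hg⟩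
      refine hKU fun i => ?_
      induction i using Fin.cases with
      | zero => simpa using hx
      | succ j => simpa using hg j
    obtain ⟨A, O, hAo, hOo, hKA, hKO, hAO⟩ :=
      generalized_tube_lemma hK (isCompact_powSet hK n) hU'o hsub
    obtain ⟨V₁, hV₁o, hKV₁, hV₁O⟩ := ih K hK O hOo hKO
    refine ⟨A ∩ V₁, hAo.inter hV₁o, subset_inter hKA hKV₁, ?_⟩
    intro f hf
    have : (f 0, Fin.tail f) ∈ U' := hAO ⟨(hf 0).1, hV₁O (fun j => (hf j.succ).2)⟩
    simpa [U', Fin.cons_self_tail] using this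

theorem stmt10 {X : Type u} [TopologicalSpace X] (B : Set (Set X)) (hB : IsBornology B)
    (hc : HasCompactBase B) (n : ℕ) (U : Set (Set (Fin n → X)))
    (hU : IsBCover (BornPow B n) U) :
    ∃ V : Set (Set X), IsBCover B V ∧
      IsBCover (BornPow B n) {s | ∃ v ∈ V, s = powSet v n} ∧
      ∀ v ∈ V, ∃ u ∈ U, powSet v n ⊆ u := by
  obtain ⟨B0, hB0B, hB0c, hB0cof⟩ := hc
  obtain ⟨hUo, hUuniv, hUcov⟩ := hU
  have key : ∀ b ∈ B, ∃ V : Set X, IsOpen V ∧ b ⊆ V ∧ ∃ u ∈ U, powSet V n ⊆ u := by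
    intro b hb
    obtain ⟨b0, hb0, hbb0⟩ := hB0cof b hb
    obtain ⟨u, hu, hpu⟩ := hUcov (powSet b0 n) ⟨b0, hB0B hb0, subset_rfl⟩
    obtain ⟨V, hVo, hb0V, hVu⟩ := wallace n b0 (hB0c b0 hb0) u (hUo u hu) hpu
    exact ⟨V, hVo, hbb0.trans hb0V, u, hu, hVu⟩
  choose! V hVo hbV u hu hVu using key
  have hVne : ∀ b ∈ B, V b ≠ univ := by
    intro b hb h
    apply hUuniv
    have : u b = univ := univ_subset_iff.mp (by rw [← powSet_univ n, ← h]; exact hVu b hb)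
    exact this ▸ hu b hb
  refine ⟨V '' B, ⟨?_, ?_, ?_⟩, ⟨?_, ?_, ?_⟩, ?_⟩
  · rintro v ⟨b, hb, rfl⟩; exact hVo b hb
  · rintro ⟨b, hb, h⟩; exact hVne b hb h
  · intro b hb; exact ⟨V b, ⟨b, hb, rfl⟩, hbV b hb⟩
  · rintro s ⟨v, ⟨b, hb, rfl⟩, rfl⟩; exact isOpen_powSet (hVo b hb) n
  · rintro ⟨v, ⟨b, hb, rfl⟩, h⟩
    apply hUuniv
    have : u b = univ := univ_subset_iff.mp (h ▸ hVu b hb)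
    exact this ▸ hu b hb
  · rintro s ⟨b, hb, hs⟩
    exact ⟨powSet (V b) n, ⟨V b, ⟨b, hb, rfl⟩, rfl⟩, hs.trans (powSet_mono (hbV b hb) n)⟩
  · rintro v ⟨b, hb, rfl⟩; exact ⟨u b, hu b hb, hVu b hb⟩
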